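/- arXiv:2211.11411 — 2 statements merged into one kernel-verified Lean document; each statement's English description precedes it below -/
import Mathlib

section
/- Let Γ be a countable discrete group and (f_n) a sequence of nonnegative functions in ℓ²(Γ), and suppose the sequences (s_n^{(i)}) ⊆ Γ, i = 1,…,k, satisfy: (a) f_n = ∑_{i=1}^k δ_{s_n^{(i)}} * α_i + w_n with α_i ∈ ℓ²(Γ) nonnegative and ‖w_n‖₂ → 0, and (b) for i ≠ j, (s_n^{(i)})⁻¹ s_n^{(j)} leaves every finite subset of Γ as n → ∞. Then for every s ∈ Γ, Φ(f_n)(s) → ∑_{i=1}^k Φ(α_i)(s) as n → ∞. -/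
open Filter



section CS
variable {ι : Type*} (g h : ι → ℝ)

lemma memL2 (hg : Summable fun x => g x ^ 2) : Memℓp g 2 := by
  apply memℓp_gen
  convert hg using 2 with x
  simp [Real.norm_eq_abs, sq_abs]

noncomputable def mkL2 (hg : Summable fun x => g x ^ 2) : lp (fun _ : ι => ℝ) 2 :=
  ⟨g, memL2 g hg⟩

lemma norm_mkL2_sq (hg : Summable fun x => g x ^ 2) :
    ‖mkL2 g hg‖ ^ 2 = ∑' x, g x ^ 2 := by
  have := lp.norm_rpow_eq_tsum (p := 2) (by norm_num) (mkL2 g hg)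
  simpa [Real.norm_eq_abs, sq_abs, mkL2] using this

lemma inner_mkL2 (hg : Summable fun x => g x ^ 2) (hh : Summable fun x => h x ^ 2) :
    (inner ℝ (mkL2 g hg) (mkL2 h hh) : ℝ) = ∑' x, g x * h x := by
  rw [lp.inner_eq_tsum]
  simp only [Real.inner_apply]
  rfl

lemma summable_mul_of_sq (hg : Summable fun x => g x ^ 2)
    (hh : Summable fun x => h x ^ 2) : Summable fun x => g x * h x := by
  have := lp.summable_inner (𝕜 := ℝ) (mkL2 g hg) (mkL2 h hh)
  convert this using 1
  · rfl
  · funext x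
    rw [Real.inner_apply]
    rfl

lemma abs_tsum_mul_le (hg : Summable fun x => g x ^ 2)
    (hh : Summable fun x => h x ^ 2) :
    |∑' x, g x * h x| ≤ Real.sqrt (∑' x, g x ^ 2) * Real.sqrt (∑' x, h x ^ 2) := by
  have h1 := abs_real_inner_le_norm (mkL2 g hg) (mkL2 h hh)
  rw [inner_mkL2] at h1
  refine h1.trans_eq ?_
  congr 1
  · rw [show ‖mkL2 g hg‖ = Real.sqrt (‖mkL2 g hg‖ ^ 2) by
      rw [Real.sqrt_sq (norm_nonneg _)], norm_mkL2_sq]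
  · rw [show ‖mkL2 h hh‖ = Real.sqrt (‖mkL2 h hh‖ ^ 2) by
      rw [Real.sqrt_sq (norm_nonneg _)], norm_mkL2_sq]

end CS

section Offdiag
variable {Γ : Type*} [Group Γ]

lemma summable_sq_shift (g : Γ → ℝ) (hg : Summable fun x => g x ^ 2) (e : Γ ≃ Γ) :
    Summable fun x => g (e x) ^ 2 :=
  (e.summable_iff (f := fun x => g x ^ 2)).2 hg

lemma exists_tail {ι : Type*} (g : ι → ℝ) {ε : ℝ} (hε : 0 < ε) :
    ∃ F : Finset ι, ∑' (x : {x // x ∉ F}), g x < ε :=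
  ((tendsto_order.1 (tendsto_tsum_compl_atTop_zero g)).2 ε hε).exists

lemma offdiag_tendsto (αi αj : Γ → ℝ) (hi : Summable fun x => αi x ^ 2)
    (hj : Summable fun x => αj x ^ 2) (u : ℕ → Γ)
    (hu : ∀ F : Finset Γ, ∀ᶠ n in atTop, u n ∉ F) (t : Γ) :
    Tendsto (fun n => ∑' y, αi y * αj ((u n)⁻¹ * (y * t))) atTop (nhds 0) := by
  classical
  set Ni := Real.sqrt (∑' x, αi x ^ 2) with hNi
  set Nj := Real.sqrt (∑' x, αj x ^ 2) with hNj
  have hNi0 : 0 ≤ Ni := Real.sqrt_nonneg _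
  have hNj0 : 0 ≤ Nj := Real.sqrt_nonneg _
  rw [Metric.tendsto_atTop]
  intro ε hε
  set δ := ε / (2 * (Ni + Nj + 1)) with hδ
  have hδ0 : 0 < δ := by positivity
  obtain ⟨Fi, hFi⟩ := exists_tail (fun x => αi x ^ 2) (pow_pos hδ0 2)
  obtain ⟨Fj, hFj⟩ := exists_tail (fun x => αj x ^ 2) (pow_pos hδ0 2)
  set Bad : Finset Γ := Fi.biUnion (fun y => Fj.image (fun z => y * t * z⁻¹)) with hBad
  obtain ⟨N, hN⟩ := (Filter.eventually_atTop).1 (hu Bad)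
  refine ⟨N, fun n hn => ?_⟩
  have hbn := hN n hn
  set v := (u n)⁻¹ with hv
  set β : Γ → ℝ := fun y => αj (v * (y * t)) with hβdef
  set e : Γ ≃ Γ := (Equiv.mulRight t).trans (Equiv.mulLeft v) with he
  have heval : ∀ y, e y = v * (y * t) := fun y => rfl
  have hβ : Summable fun y => β y ^ 2 := summable_sq_shift αj hj e
  have hprod : Summable fun y => αi y * β y := summable_mul_of_sq _ _ hi hβ
  have hsplit := Summable.sum_add_tsum_subtype_compl hprod Fi
  -- tail bound
  have htail : |∑' (y : {y // y ∉ Fi}), αi ↑y * β ↑y| ≤ δ * Nj := by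
    have h1 := abs_tsum_mul_le (fun y : {y // y ∉ Fi} => αi y)
      (fun y : {y // y ∉ Fi} => β y) (hi.subtype _) (hβ.subtype _)
    refine h1.trans (mul_le_mul ((Real.sqrt_lt' hδ0).2 hFi).le ?_
      (Real.sqrt_nonneg _) hδ0.le)
    have hle : (∑' (y : {y // y ∉ Fi}), β (↑y) ^ 2) ≤ ∑' y, β y ^ 2 := by
      have h2 := Summable.sum_add_tsum_subtype_compl hβ Fi
      have h3 : 0 ≤ ∑ y ∈ Fi, β y ^ 2 := Finset.sum_nonneg fun _ _ => sq_nonneg _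
      linarith
    have heq : (∑' y, β y ^ 2) = ∑' y, αj y ^ 2 := e.tsum_eq (fun x => αj x ^ 2)
    rw [hNj]
    exact Real.sqrt_le_sqrt (by rw [← heq]; exact hle)
  -- finite part bound
  have hfin : |∑ y ∈ Fi, αi y * β y| ≤ Ni * δ := by
    have h1 : |∑ y ∈ Fi, αi y * β y| ≤ ∑ y ∈ Fi, |αi y| * |β y| := by
      refine (Finset.abs_sum_le_sum_abs _ _).trans ?_
      simp [abs_mul, le_refl]
    have h2 : (∑ y ∈ Fi, |αi y| * |β y|) ^ 2 ≤
        (∑ y ∈ Fi, αi y ^ 2) * ∑ y ∈ Fi, β y ^ 2 := by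
      simpa [sq_abs] using
        Finset.sum_mul_sq_le_sq_mul_sq Fi (fun y => |αi y|) (fun y => |β y|)
    -- ∑_{Fi} β ^ 2 < δ ^ 2
    have hβsmall : (∑ y ∈ Fi, β y ^ 2) ≤ δ ^ 2 := by
      set Fi' : Finset Γ := Fi.image (fun y => v * (y * t)) with hFi'
      have hinj : Set.InjOn (fun y => v * (y * t)) Fi := fun a _ b _ hab => by
        simpa [mul_assoc] using hab
      have hsum_eq : (∑ y ∈ Fi, β y ^ 2) = ∑ z ∈ Fi', αj z ^ 2 := by
        rw [hFi', Finset.sum_image (fun a ha b hb hab => hinj ha hb hab)]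
      have hdisj : Disjoint Fi' Fj := by
        rw [Finset.disjoint_left]
        rintro z hz hzj
        obtain ⟨y, hy, rfl⟩ := Finset.mem_image.1 hz
        apply hbn
        rw [hBad, Finset.mem_biUnion]
        refine ⟨y, hy, Finset.mem_image.2 ⟨v * (y * t), hzj, ?_⟩⟩
        rw [hv]; group
      have hunion : (∑ z ∈ Fi' ∪ Fj, αj z ^ 2) ≤ ∑' z, αj z ^ 2 :=
        Summable.sum_le_tsum _ (fun _ _ => sq_nonneg _) hj
      rw [Finset.sum_union hdisj] at hunion
      have h4 := Summable.sum_add_tsum_subtype_compl hj Fj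
      rw [hsum_eq]
      linarith
    have h3 : (∑ y ∈ Fi, αi y ^ 2) ≤ Ni ^ 2 := by
      rw [hNi, Real.sq_sqrt (tsum_nonneg fun _ => sq_nonneg _)]
      exact Summable.sum_le_tsum _ (fun _ _ => sq_nonneg _) hi
    have h5 : (∑ y ∈ Fi, |αi y| * |β y|) ^ 2 ≤ (Ni * δ) ^ 2 := by
      calc (∑ y ∈ Fi, |αi y| * |β y|) ^ 2 ≤
          (∑ y ∈ Fi, αi y ^ 2) * ∑ y ∈ Fi, β y ^ 2 := h2
        _ ≤ Ni ^ 2 * δ ^ 2 := by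
            refine mul_le_mul h3 hβsmall (Finset.sum_nonneg fun _ _ => sq_nonneg _)
              (sq_nonneg _)
        _ = (Ni * δ) ^ 2 := by ring
    have h6 : 0 ≤ ∑ y ∈ Fi, |αi y| * |β y| :=
      Finset.sum_nonneg fun _ _ => mul_nonneg (abs_nonneg _) (abs_nonneg _)
    refine h1.trans ?_
    have h7 := Real.sqrt_le_sqrt h5
    rwa [Real.sqrt_sq h6, Real.sqrt_sq (mul_nonneg hNi0 hδ0.le)] at h7
  -- conclude
  have hsum : (∑' y, αi y * β y) =
      (∑ y ∈ Fi, αi y * β y) + ∑' (y : {y // y ∉ Fi}), αi ↑y * β ↑y := hsplit.symm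
  have habs : |∑' y, αi y * β y| ≤ Ni * δ + δ * Nj := by
    rw [hsum]
    exact (abs_add_le _ _).trans (add_le_add hfin htail)
  have hlt : Ni * δ + δ * Nj < ε := by
    have : δ * (2 * (Ni + Nj + 1)) = ε := by
      rw [hδ]; exact div_mul_cancel₀ ε (by positivity)
    nlinarith
  rw [Real.dist_eq, sub_zero]
  exact lt_of_le_of_lt (le_of_eq (by rfl) |>.trans habs) hlt

end Offdiag

/-- If `f_n = ∑_{i=1}^k δ_{s_n^{(i)}} * α_i + w_n` with `‖w_n‖₂ → 0` and the shifts
mutually separate (`(s_n^{(i)})⁻¹ s_n^{(j)}` leaves every finite set for `i ≠ j`), then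
`Φ(f_n)(t) → ∑_{i=1}^k Φ(α_i)(t)` for every `t ∈ Γ`. -/
theorem Phi_tendsto_sum_of_decomposition {Γ : Type*} [Group Γ] [Countable Γ] (k : ℕ)
    (f : ℕ → Γ → ℝ) (α : Fin k → Γ → ℝ) (w : ℕ → Γ → ℝ) (s : ℕ → Fin k → Γ)
    (hfnn : ∀ n x, 0 ≤ f n x) (hαnn : ∀ i x, 0 ≤ α i x)
    (hα : ∀ i, Summable fun x => α i x ^ 2)
    (hw : ∀ n, Summable fun x => w n x ^ 2)
    (hf2 : ∀ n, Summable fun x => f n x ^ 2)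
    (hdecomp : ∀ n x, f n x = (∑ i : Fin k, α i ((s n i)⁻¹ * x)) + w n x)
    (hwto0 : Tendsto (fun n => ∑' x, w n x ^ 2) atTop (nhds 0))
    (hsep : ∀ i j : Fin k, i ≠ j → ∀ F : Finset Γ,
      ∀ᶠ n in atTop, (s n i)⁻¹ * s n j ∉ F) :
    ∀ t : Γ, Tendsto (fun n => ∑' x, f n x * f n (x * t)) atTop
      (nhds (∑ i : Fin k, ∑' x, α i x * α i (x * t))) := by
  intro t
  classical
  set a : ℕ → Fin k → Γ → ℝ := fun n i x => α i ((s n i)⁻¹ * x) with ha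
  have hSa : ∀ n i, Summable fun x => a n i x ^ 2 := by
    intro n i
    simpa using summable_sq_shift (α i) (hα i) (Equiv.mulLeft (s n i)⁻¹)
  have hSrt : ∀ (g : Γ → ℝ), (Summable fun x => g x ^ 2) →
      Summable fun x => g (x * t) ^ 2 := fun g hg =>
    summable_sq_shift g hg (Equiv.mulRight t)
  set g : ℕ → Γ → ℝ := fun n x => ∑ i, a n i x with hg
  have hSg : ∀ n, Summable fun x => g n x ^ 2 := by
    intro n
    have h1 : (fun x => g n x ^ 2) = fun x => ∑ i, ∑ j, a n i x * a n j x := by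
      funext x
      rw [hg]; simp only [sq]
      rw [Finset.sum_mul_sum]
    rw [h1]
    exact summable_sum (fun i _ => summable_sum
      (fun j _ => summable_mul_of_sq _ _ (hSa n i) (hSa n j)))
  have hPaa : ∀ n (i j : Fin k), Summable fun x => a n i x * a n j (x * t) :=
    fun n i j => summable_mul_of_sq _ _ (hSa n i) (hSrt _ (hSa n j))
  have hPgg : ∀ n, Summable fun x => g n x * g n (x * t) :=
    fun n => summable_mul_of_sq _ _ (hSg n) (hSrt _ (hSg n))
  have hPgw : ∀ n, Summable fun x => g n x * w n (x * t) :=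
    fun n => summable_mul_of_sq _ _ (hSg n) (hSrt _ (hw n))
  have hPwg : ∀ n, Summable fun x => w n x * g n (x * t) :=
    fun n => summable_mul_of_sq _ _ (hw n) (hSrt _ (hSg n))
  have hPww : ∀ n, Summable fun x => w n x * w n (x * t) :=
    fun n => summable_mul_of_sq _ _ (hw n) (hSrt _ (hw n))
  have hfe : ∀ n x, f n x = g n x + w n x := hdecomp
  have hsplit : ∀ n, (∑' x, f n x * f n (x * t)) =
      (∑' x, g n x * g n (x * t)) + ((∑' x, g n x * w n (x * t)) +
        ((∑' x, w n x * g n (x * t)) + (∑' x, w n x * w n (x * t)))) := by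
    intro n
    have h1 : (fun x => f n x * f n (x * t)) = fun x =>
        g n x * g n (x * t) + (g n x * w n (x * t) +
          (w n x * g n (x * t) + w n x * w n (x * t))) := by
      funext x; rw [hfe n x, hfe n (x * t)]; ring
    rw [h1, Summable.tsum_add (hPgg n) ((hPgw n).add ((hPwg n).add (hPww n))),
      Summable.tsum_add (hPgw n) ((hPwg n).add (hPww n)), Summable.tsum_add (hPwg n) (hPww n)]
  set T : ℕ → Fin k → Fin k → ℝ := fun n i j => ∑' x, a n i x * a n j (x * t) with hT
  have hGG : ∀ n, (∑' x, g n x * g n (x * t)) = ∑ i, ∑ j, T n i j := by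
    intro n
    have h1 : (fun x => g n x * g n (x * t)) =
        fun x => ∑ i, ∑ j, a n i x * a n j (x * t) := by
      funext x; rw [hg]; simp only []
      rw [Finset.sum_mul_sum]
    rw [h1, Summable.tsum_finsetSum (fun i _ => summable_sum (fun j _ => hPaa n i j))]
    exact Finset.sum_congr rfl fun i _ => Summable.tsum_finsetSum fun j _ => hPaa n i j
  have hdiag : ∀ n (i : Fin k), T n i i = ∑' y, α i y * α i (y * t) := by
    intro n i
    rw [hT]; simp only []
    rw [← (Equiv.mulLeft (s n i)).tsum_eq (fun x => a n i x * a n i (x * t))]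
    refine tsum_congr fun y => ?_
    simp only [ha, Equiv.coe_mulLeft]
    rw [inv_mul_cancel_left, mul_assoc, inv_mul_cancel_left]
  have hoff : ∀ n (i j : Fin k), T n i j =
      ∑' y, α i y * α j (((s n i)⁻¹ * s n j)⁻¹ * (y * t)) := by
    intro n i j
    rw [hT]; simp only []
    rw [← (Equiv.mulLeft (s n i)).tsum_eq (fun x => a n i x * a n j (x * t))]
    refine tsum_congr fun y => ?_
    simp only [ha, Equiv.coe_mulLeft]
    rw [inv_mul_cancel_left]
    congr 2
    group
  have hEt : Tendsto (fun n => ∑ i, ∑ j, (if i = j then 0 else T n i j)) atTop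
      (nhds 0) := by
    have h0 : (0 : ℝ) = ∑ i : Fin k, ∑ j : Fin k, 0 := by simp
    rw [h0]
    refine tendsto_finset_sum _ fun i _ => tendsto_finset_sum _ fun j _ => ?_
    by_cases hij : i = j
    · simp [hij]
    · simp only [if_neg hij]
      have := offdiag_tendsto (α i) (α j) (hα i) (hα j)
        (fun n => (s n i)⁻¹ * s n j) (hsep i j hij) t
      refine Tendsto.congr (fun n => ?_) this
      exact (hoff n i j).symm
  have hTsum : ∀ n, (∑ i, ∑ j, T n i j) =
      (∑ i : Fin k, ∑' x, α i x * α i (x * t)) +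
        ∑ i, ∑ j, (if i = j then 0 else T n i j) := by
    intro n
    rw [← Finset.sum_add_distrib]
    refine Finset.sum_congr rfl fun i _ => ?_
    have h1 : ∀ j, T n i j = (if i = j then (∑' x, α i x * α i (x * t)) else 0) +
        (if i = j then 0 else T n i j) := by
      intro j
      by_cases hij : i = j
      · subst hij; simp [hdiag n i]
      · simp [hij]
    calc ∑ j, T n i j
        = ∑ j, ((if i = j then (∑' x, α i x * α i (x * t)) else 0) +
          (if i = j then 0 else T n i j)) := Finset.sum_congr rfl fun j _ => h1 j
      _ = _ := by rw [Finset.sum_add_distrib]; simp [Finset.sum_ite_eq]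
  -- norm bounds for g
  set K : ℝ := (∑ i : Fin k, Real.sqrt (∑' x, α i x ^ 2)) ^ 2 with hK
  have haa2 : ∀ n i, (∑' x, a n i x ^ 2) = ∑' x, α i x ^ 2 := by
    intro n i
    rw [ha]; simp only []
    simpa using (Equiv.mulLeft (s n i)⁻¹).tsum_eq (fun x => α i x ^ 2)
  have hG2 : ∀ n, (∑' x, g n x ^ 2) ≤ K := by
    intro n
    have h1 : (fun x => g n x ^ 2) = fun x => ∑ i, ∑ j, a n i x * a n j x := by
      funext x
      rw [hg]; simp only [sq]
      rw [Finset.sum_mul_sum]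
    rw [h1, Summable.tsum_finsetSum (fun i _ => summable_sum
      (fun j _ => summable_mul_of_sq _ _ (hSa n i) (hSa n j)))]
    have h2 : ∀ i : Fin k, (∑' x, ∑ j, a n i x * a n j x) =
        ∑ j, ∑' x, a n i x * a n j x := fun i =>
      Summable.tsum_finsetSum fun j _ => summable_mul_of_sq _ _ (hSa n i) (hSa n j)
    calc (∑ i, ∑' x, ∑ j, a n i x * a n j x)
        = ∑ i, ∑ j, ∑' x, a n i x * a n j x := Finset.sum_congr rfl fun i _ => h2 i
      _ ≤ ∑ i, ∑ j, Real.sqrt (∑' x, α i x ^ 2) * Real.sqrt (∑' x, α j x ^ 2) := by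
          refine Finset.sum_le_sum fun i _ => Finset.sum_le_sum fun j _ => ?_
          refine (le_abs_self _).trans ?_
          have := abs_tsum_mul_le (a n i) (a n j) (hSa n i) (hSa n j)
          rwa [haa2 n i, haa2 n j] at this
      _ = K := by rw [hK, sq, Finset.sum_mul_sum]
  have hwrt : ∀ n, (∑' x, w n (x * t) ^ 2) = ∑' x, w n x ^ 2 := fun n => by
    simpa using (Equiv.mulRight t).tsum_eq (fun x => w n x ^ 2)
  have hgrt : ∀ n, (∑' x, g n (x * t) ^ 2) = ∑' x, g n x ^ 2 := fun n => by
    simpa using (Equiv.mulRight t).tsum_eq (fun x => g n x ^ 2)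
  have hb : Tendsto (fun n => Real.sqrt (∑' x, w n x ^ 2)) atTop (nhds 0) := by
    have := (Real.continuous_sqrt.tendsto 0).comp hwto0
    simpa [Function.comp_def] using this
  have hgw0 : Tendsto (fun n => ∑' x, g n x * w n (x * t)) atTop (nhds 0) := by
    refine squeeze_zero_norm
      (a := fun n => Real.sqrt K * Real.sqrt (∑' x, w n x ^ 2)) (fun n => ?_) ?_
    · rw [Real.norm_eq_abs]
      refine (abs_tsum_mul_le _ _ (hSg n) (hSrt _ (hw n))).trans ?_
      refine mul_le_mul (Real.sqrt_le_sqrt (hG2 n)) (le_of_eq ?_)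
        (Real.sqrt_nonneg _) (Real.sqrt_nonneg _)
      rw [hwrt n]
    · simpa using (tendsto_const_nhds (x := Real.sqrt K)).mul hb
  have hwg0 : Tendsto (fun n => ∑' x, w n x * g n (x * t)) atTop (nhds 0) := by
    refine squeeze_zero_norm
      (a := fun n => Real.sqrt (∑' x, w n x ^ 2) * Real.sqrt K) (fun n => ?_) ?_
    · rw [Real.norm_eq_abs]
      refine (abs_tsum_mul_le _ _ (hw n) (hSrt _ (hSg n))).trans ?_
      refine mul_le_mul (le_refl _) ?_ (Real.sqrt_nonneg _) (Real.sqrt_nonneg _)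
      rw [hgrt n]
      exact Real.sqrt_le_sqrt (hG2 n)
    · simpa using hb.mul (tendsto_const_nhds (x := Real.sqrt K))
  have hww0 : Tendsto (fun n => ∑' x, w n x * w n (x * t)) atTop (nhds 0) := by
    refine squeeze_zero_norm
      (a := fun n => Real.sqrt (∑' x, w n x ^ 2) * Real.sqrt (∑' x, w n x ^ 2))
      (fun n => ?_) ?_
    · rw [Real.norm_eq_abs]
      refine (abs_tsum_mul_le _ _ (hw n) (hSrt _ (hw n))).trans ?_
      refine mul_le_mul (le_refl _) (le_of_eq ?_) (Real.sqrt_nonneg _)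
        (Real.sqrt_nonneg _)
      rw [hwrt n]
    · simpa using hb.mul hb
  have hfinal : (fun n => ∑' x, f n x * f n (x * t)) = fun n =>
      ((∑ i : Fin k, ∑' x, α i x * α i (x * t)) +
        ∑ i, ∑ j, (if i = j then 0 else T n i j)) +
      ((∑' x, g n x * w n (x * t)) + ((∑' x, w n x * g n (x * t)) +
        (∑' x, w n x * w n (x * t)))) := by
    funext n; rw [hsplit n, hGG n, hTsum n]
  rw [hfinal]
  have hfin := (tendsto_const_nhds
    (x := ∑ i : Fin k, ∑' x, α i x * α i (x * t))).add hEt |>.add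
    (hgw0.add (hwg0.add hww0))
  simpa using hfin
end

section
/- Let Γ be a finitely generated amenable group with right Cayley graph X with respect to a finite symmetric generating set, and let P be a Γ-invariant site percolation on X with no infinite components. Then for every s ∈ Γ, E[ |K(o) \ K(o)s⁻¹| / |K(o)| ; o ∈ ω ] = P[o ∈ ω, s ∉ K(o)], where K(o) is the cluster of the identity o and the expectation uses the convention 0/0 = 0. -/
open MeasureTheory Filter
open scoped symmDiff ENNReal

/-- The percolation cluster of `x` in the Cayley graph of `Γ` (w.r.t. generating set `S`)
under the configuration `ω` of open sites. -/
def percolationCluster {Γ : Type*} [Group Γ] (S : Finset Γ) (ω : Γ → Bool) (x : Γ) :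
    Set Γ :=
  {y | ω x = true ∧
    Relation.ReflTransGen (fun a b => ω a = true ∧ ω b = true ∧ a⁻¹ * b ∈ S) x y}

namespace PercAux

variable {Γ : Type*} [Group Γ]

/-- Site adjacency relation. -/
def pRel (S : Finset Γ) (ω : Γ → Bool) (a b : Γ) : Prop :=
  ω a = true ∧ ω b = true ∧ a⁻¹ * b ∈ S

lemma mem_cluster_iff {S : Finset Γ} {ω : Γ → Bool} {x y : Γ} :
    y ∈ percolationCluster S ω x ↔
      ω x = true ∧ Relation.ReflTransGen (pRel S ω) x y := Iff.rfl

lemma omega_of_mem {S : Finset Γ} {ω : Γ → Bool} {x y : Γ}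
    (h : y ∈ percolationCluster S ω x) : ω y = true := by
  obtain ⟨hx, hr⟩ := h
  induction hr with
  | refl => exact hx
  | tail _ hrel _ => exact hrel.2.1

lemma pRel_symm {S : Finset Γ} (hS : ∀ g ∈ S, g⁻¹ ∈ S) (ω : Γ → Bool) :
    Symmetric (pRel S ω) := by
  rintro a b ⟨ha, hb, hab⟩
  refine ⟨hb, ha, ?_⟩
  have := hS _ hab
  simpa [mul_inv_rev] using this

lemma mem_cluster_symm {S : Finset Γ} (hS : ∀ g ∈ S, g⁻¹ ∈ S) {ω : Γ → Bool} {x y : Γ}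
    (h : y ∈ percolationCluster S ω x) : x ∈ percolationCluster S ω y :=
  ⟨omega_of_mem h, (@Relation.ReflTransGen.symmetric _ _ ⟨fun a b h => pRel_symm hS ω h⟩).symm _ _ h.2⟩

lemma cluster_eq_of_mem {S : Finset Γ} (hS : ∀ g ∈ S, g⁻¹ ∈ S) {ω : Γ → Bool} {x y : Γ}
    (h : y ∈ percolationCluster S ω x) :
    percolationCluster S ω y = percolationCluster S ω x := by
  ext z
  constructor
  · rintro ⟨hy, hr⟩
    exact ⟨h.1, h.2.trans hr⟩
  · rintro ⟨hx, hr⟩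
    exact ⟨omega_of_mem h, ((mem_cluster_symm hS h).2).trans hr⟩

lemma rtg_conj {S : Finset Γ} (g : Γ) (ω : Γ → Bool) {x y : Γ}
    (h : Relation.ReflTransGen (pRel S ω) x y) :
    Relation.ReflTransGen (pRel S (fun z => ω (g⁻¹ * z))) (g * x) (g * y) := by
  induction h with
  | refl => exact .refl
  | tail _ hrel ih =>
    refine ih.tail ?_
    obtain ⟨ha, hb, hab⟩ := hrel
    refine ⟨by simpa using ha, by simpa using hb, ?_⟩
    simpa [mul_assoc, mul_inv_rev] using hab

/-- Equivariance of clusters. -/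
lemma cluster_smul (S : Finset Γ) (g : Γ) (ω : Γ → Bool) (x : Γ) :
    percolationCluster S (fun z => ω (g⁻¹ * z)) x
      = (fun z => g * z) '' percolationCluster S ω (g⁻¹ * x) := by
  ext y
  constructor
  · rintro ⟨hx, hr⟩
    refine ⟨g⁻¹ * y, ⟨hx, ?_⟩, by simp⟩
    have := rtg_conj (S := S) g⁻¹ (fun z => ω (g⁻¹ * z)) hr
    simp [mul_assoc] at this; exact this
  · rintro ⟨w, ⟨hx, hr⟩, rfl⟩
    refine ⟨hx, ?_⟩
    have := rtg_conj (S := S) g ω hr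
    simp [mul_assoc] at this; exact this

lemma measurable_pRel (S : Finset Γ) (a b : Γ) :
    MeasurableSet {ω : Γ → Bool | pRel S ω a b} := by
  have : {ω : Γ → Bool | pRel S ω a b}
      = ((fun ω : Γ → Bool => ω a) ⁻¹' {true}) ∩ ((fun ω : Γ → Bool => ω b) ⁻¹' {true})
        ∩ {_ω : Γ → Bool | a⁻¹ * b ∈ S} := by
    ext ω; simp [pRel, Set.mem_inter_iff, and_assoc]
  rw [this]
  exact (((measurable_pi_apply a) (measurableSet_singleton true)).inter
    ((measurable_pi_apply b) (measurableSet_singleton true))).inter (MeasurableSet.const _)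

lemma measurable_chain (S : Finset Γ) (l : List Γ) (x : Γ) :
    MeasurableSet {ω : Γ → Bool | List.Chain (pRel S ω) x l} := by
  induction l generalizing x with
  | nil => simpa [List.Chain] using MeasurableSet.univ
  | cons b l ih =>
    have : {ω : Γ → Bool | List.Chain (pRel S ω) x (b :: l)}
        = {ω : Γ → Bool | pRel S ω x b} ∩ {ω : Γ → Bool | List.Chain (pRel S ω) b l} := by
      ext ω; simp [List.Chain]
    rw [this]
    exact (measurable_pRel S x b).inter (ih b)

lemma measurable_rtg [Countable Γ] (S : Finset Γ) (x y : Γ) :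
    MeasurableSet {ω : Γ → Bool | Relation.ReflTransGen (pRel S ω) x y} := by
  have : {ω : Γ → Bool | Relation.ReflTransGen (pRel S ω) x y}
      = ⋃ l : {l : List Γ // (x :: l).getLast (List.cons_ne_nil x l) = y},
          {ω : Γ → Bool | List.Chain (pRel S ω) x l.1} := by
    ext ω
    simp only [Set.mem_setOf_eq, Set.mem_iUnion]
    constructor
    · intro h
      obtain ⟨l, hc, hl⟩ := List.exists_isChain_cons_of_relationReflTransGen h
      exact ⟨⟨l, hl⟩, hc⟩
    · rintro ⟨⟨l, hl⟩, hc⟩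
      exact List.relationReflTransGen_of_exists_isChain_cons l hc hl
  rw [this]
  exact MeasurableSet.iUnion fun l => measurable_chain S l.1 x

lemma measurable_memCluster [Countable Γ] (S : Finset Γ) (x y : Γ) :
    MeasurableSet {ω : Γ → Bool | y ∈ percolationCluster S ω x} := by
  have : {ω : Γ → Bool | y ∈ percolationCluster S ω x}
      = ((fun ω : Γ → Bool => ω x) ⁻¹' {true})
        ∩ {ω : Γ → Bool | Relation.ReflTransGen (pRel S ω) x y} := by
    ext ω; exact Iff.rfl
  rw [this]
  exact ((measurable_pi_apply x) (measurableSet_singleton true)).inter (measurable_rtg S x y)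

lemma measurable_eqFinset {Γ : Type*} [Countable Γ] (T : (Γ → Bool) → Set Γ)
    (hT : ∀ x, MeasurableSet {ω | x ∈ T ω}) (F : Finset Γ) :
    MeasurableSet {ω | T ω = (F : Set Γ)} := by
  have : {ω | T ω = (F : Set Γ)}
      = (⋂ x ∈ F, {ω | x ∈ T ω}) ∩ (⋂ x ∈ ((F : Set Γ))ᶜ, {ω | x ∈ T ω}ᶜ) := by
    ext ω
    simp only [Set.mem_inter_iff, Set.mem_iInter, Set.mem_setOf_eq, Set.mem_compl_iff,
      Set.ext_iff, Finset.mem_coe]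
    constructor
    · intro h; exact ⟨fun x hx => (h x).2 hx, fun x hx hmem => hx ((h x).1 hmem)⟩
    · intro ⟨h1, h2⟩ x
      constructor
      · intro hx; by_contra hF; exact h2 x hF hx
      · intro hx; exact h1 x hx
  rw [this]
  exact (MeasurableSet.biInter (Set.to_countable _) fun x _ => hT x).inter
    (MeasurableSet.biInter (Set.to_countable _) fun x _ => (hT x).compl)

lemma measurable_natCard {Γ : Type*} [Countable Γ] (T : (Γ → Bool) → Set Γ)
    (hT : ∀ x, MeasurableSet {ω | x ∈ T ω}) :
    Measurable fun ω => Nat.card (T ω) := by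
  apply measurable_to_countable'
  intro n
  match n with
  | 0 =>
    have : (fun ω => Nat.card (T ω)) ⁻¹' {0}
        = {ω | T ω = ((∅ : Finset Γ) : Set Γ)}
          ∪ (⋃ F : Finset Γ, {ω | T ω = (F : Set Γ)})ᶜ := by
      ext ω
      simp only [Set.mem_preimage, Set.mem_singleton_iff, Set.mem_union, Set.mem_setOf_eq,
        Set.mem_compl_iff, Set.mem_iUnion, Finset.coe_empty]
      rw [Nat.card_coe_set_eq]
      constructor
      · intro h
        rcases (T ω).finite_or_infinite with hfin | hinf
        · exact Or.inl ((Set.ncard_eq_zero hfin).1 h)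
        · exact Or.inr fun ⟨F, hF⟩ => hinf (hF ▸ F.finite_toSet)
      · rintro (h | h)
        · rw [h]; simp
        · have hinf : (T ω).Infinite := fun hfin => h ⟨hfin.toFinset, by simp⟩
          exact hinf.ncard
    rw [this]
    exact ((measurable_eqFinset T hT ∅).union
      (MeasurableSet.iUnion fun F => measurable_eqFinset T hT F).compl)
  | (m+1) =>
    have : (fun ω => Nat.card (T ω)) ⁻¹' {m+1}
        = ⋃ F : {F : Finset Γ // F.card = m+1}, {ω | T ω = (F.1 : Set Γ)} := by
      ext ω
      simp only [Set.mem_preimage, Set.mem_singleton_iff, Set.mem_iUnion]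
      rw [Nat.card_coe_set_eq]
      constructor
      · intro h
        have hfin : (T ω).Finite := by
          by_contra hinf
          rw [Set.Infinite.ncard hinf] at h
          exact Nat.succ_ne_zero m h.symm
        refine ⟨⟨hfin.toFinset, ?_⟩, by simp⟩
        rw [← Set.ncard_eq_toFinset_card (T ω) hfin]
        exact h
      · rintro ⟨⟨F, hF⟩, h⟩
        simp only [Set.mem_setOf_eq] at h
        rw [h, Set.ncard_coe_finset, hF]
    rw [this]
    exact MeasurableSet.iUnion fun F => measurable_eqFinset T hT F.1

lemma mem_image_rs (s x : Γ) (C : Set Γ) :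
    x ∈ (fun z => z * s⁻¹) '' C ↔ x * s ∈ C := by
  constructor
  · rintro ⟨y, hy, rfl⟩
    simpa [mul_assoc] using hy
  · intro h
    exact ⟨x * s, h, by simp [mul_assoc]⟩

lemma tsum_ite_finite {Γ : Type*} {D : Set Γ} (hD : D.Finite) (r : ℝ≥0∞)
    (f : Γ → ℝ≥0∞) (hf : ∀ x ∈ D, f x = r) (hf0 : ∀ x ∉ D, f x = 0) :
    ∑' x, f x = (Nat.card D) * r := by
  rw [tsum_eq_sum (s := hD.toFinset) (fun b hb => hf0 b (by simpa using hb))]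
  rw [Finset.sum_congr rfl (fun x hx => hf x (by simpa using hx)), Finset.sum_const,
    nsmul_eq_mul]
  congr 1
  rw [Nat.card_coe_set_eq, Set.ncard_eq_toFinset_card D hD]

end PercAux

open PercAux

/-- For a Γ-invariant site percolation with no infinite components on a Cayley graph of a
finitely generated amenable group (amenability expressed by a right-Følner sequence):
`E[|K(o) \ K(o)s⁻¹| / |K(o)| ; o ∈ ω] = P[o ∈ ω, s ∉ K(o)]` (mass-transport identity). -/
theorem expected_cluster_boundary_eq {Γ : Type*} [Group Γ] [Countable Γ] [DecidableEq Γ]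
    (S : Finset Γ) (hSsymm : ∀ g ∈ S, g⁻¹ ∈ S)
    (hSgen : Subgroup.closure (S : Set Γ) = ⊤)
    (hamen : ∃ Fo : ℕ → Finset Γ, (∀ n, (Fo n).Nonempty) ∧ ∀ g : Γ,
      Tendsto (fun n => (((Fo n ∆ (Fo n).image (fun x => x * g)).card : ℝ) / (Fo n).card))
        atTop (nhds 0))
    (P : Measure (Γ → Bool)) [IsProbabilityMeasure P]
    (hinv : ∀ g : Γ, Measure.map (fun ω => fun x : Γ => ω (g⁻¹ * x)) P = P)
    (hfin : ∀ᵐ ω ∂P, ∀ x : Γ, (percolationCluster S ω x).Finite)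
    (s : Γ) :
    (∫ ω, (if ω 1 = true then
        ((Nat.card ↥(percolationCluster S ω 1 \
            (fun x => x * s⁻¹) '' percolationCluster S ω 1) : ℝ)
          / (Nat.card ↥(percolationCluster S ω 1) : ℝ))
      else 0) ∂P)
      = (P {ω | ω 1 = true ∧ s ∉ percolationCluster S ω 1}).toReal := by
  classical
  -- basic measurability facts
  have hmemK : ∀ y : Γ, MeasurableSet {ω : Γ → Bool | y ∈ percolationCluster S ω 1} :=
    fun y => measurable_memCluster S 1 y
  have hmemD : ∀ y : Γ, MeasurableSet {ω : Γ → Bool |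
      y ∈ percolationCluster S ω 1 \ (fun x => x * s⁻¹) '' percolationCluster S ω 1} := by
    intro y
    have : {ω : Γ → Bool |
        y ∈ percolationCluster S ω 1 \ (fun x => x * s⁻¹) '' percolationCluster S ω 1}
        = {ω : Γ → Bool | y ∈ percolationCluster S ω 1}
          ∩ {ω : Γ → Bool | y * s ∈ percolationCluster S ω 1}ᶜ := by
      ext ω
      simp only [Set.mem_setOf_eq, Set.mem_diff, Set.mem_inter_iff, Set.mem_compl_iff,
        mem_image_rs]
    rw [this]
    exact (hmemK y).inter (hmemK (y * s)).compl
  have hcK : Measurable fun ω : Γ → Bool => Nat.card (percolationCluster S ω 1) :=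
    measurable_natCard _ hmemK
  have hcD : Measurable fun ω : Γ → Bool =>
      Nat.card ↥(percolationCluster S ω 1 \ (fun x => x * s⁻¹) '' percolationCluster S ω 1) :=
    measurable_natCard _ hmemD
  have hm1 : MeasurableSet {ω : Γ → Bool | ω 1 = true} := by
    have : {ω : Γ → Bool | ω 1 = true} = (fun ω : Γ → Bool => ω 1) ⁻¹' {true} := rfl
    rw [this]
    exact (measurable_pi_apply 1) (measurableSet_singleton true)
  have hcast : Measurable (Nat.cast : ℕ → ℝ≥0∞) := measurable_from_top
  have hcastR : Measurable (Nat.cast : ℕ → ℝ) := measurable_from_top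
  -- the transport functions
  set g : Γ → (Γ → Bool) → ℝ≥0∞ := fun x ω =>
    if x ∈ percolationCluster S ω 1 ∧ x * s ∉ percolationCluster S ω 1 then
      ((Nat.card (percolationCluster S ω 1) : ℝ≥0∞))⁻¹ else 0 with hg_def
  set h : Γ → (Γ → Bool) → ℝ≥0∞ := fun x ω =>
    if x ∈ percolationCluster S ω 1 ∧ s ∉ percolationCluster S ω 1 then
      ((Nat.card (percolationCluster S ω 1) : ℝ≥0∞))⁻¹ else 0 with hh_def
  have hgmeas : ∀ x, Measurable (g x) := by
    intro x
    apply Measurable.ite _ (hcast.comp hcK).inv measurable_const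
    exact (hmemK x).inter (hmemK (x * s)).compl
  have hhmeas : ∀ x, Measurable (h x) := by
    intro x
    apply Measurable.ite _ (hcast.comp hcK).inv measurable_const
    exact (hmemK x).inter (hmemK s).compl
  -- the target event
  set E : Set (Γ → Bool) := {ω | ω 1 = true ∧ s ∉ percolationCluster S ω 1} with hE_def
  have hE : MeasurableSet E := by
    have : E = ((fun ω : Γ → Bool => ω 1) ⁻¹' {true})
        ∩ {ω : Γ → Bool | s ∈ percolationCluster S ω 1}ᶜ := by
      ext ω; simp [hE_def]
    rw [this]
    exact ((measurable_pi_apply 1) (measurableSet_singleton true)).inter (hmemK s).compl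
  -- nonnegativity and measurability of the integrand
  have hnn : 0 ≤ᵐ[P] fun ω : Γ → Bool => (if ω 1 = true then
      ((Nat.card ↥(percolationCluster S ω 1 \
          (fun x => x * s⁻¹) '' percolationCluster S ω 1) : ℝ)
        / (Nat.card ↥(percolationCluster S ω 1) : ℝ)) else 0) := by
    filter_upwards with ω
    dsimp only [Pi.zero_apply]
    split
    · positivity
    · exact le_refl 0
  have hsm : AEStronglyMeasurable (fun ω : Γ → Bool => (if ω 1 = true then
      ((Nat.card ↥(percolationCluster S ω 1 \
          (fun x => x * s⁻¹) '' percolationCluster S ω 1) : ℝ)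
        / (Nat.card ↥(percolationCluster S ω 1) : ℝ)) else 0)) P := by
    apply Measurable.aestronglyMeasurable
    apply Measurable.ite _ ((hcastR.comp hcD).div (hcastR.comp hcK)) measurable_const
    exact hm1
  rw [integral_eq_lintegral_of_nonneg_ae hnn hsm]
  congr 1
  -- step A : rewrite the lintegral as a sum of transport terms
  have keyA : (fun ω : Γ → Bool => ENNReal.ofReal (if ω 1 = true then
      ((Nat.card ↥(percolationCluster S ω 1 \
          (fun x => x * s⁻¹) '' percolationCluster S ω 1) : ℝ)
        / (Nat.card ↥(percolationCluster S ω 1) : ℝ)) else 0))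
      =ᵐ[P] fun ω => ∑' x, g x ω := by
    filter_upwards [hfin] with ω hω
    by_cases h1 : ω 1 = true
    · have hKfin : (percolationCluster S ω 1).Finite := hω 1
      have hDfin : (percolationCluster S ω 1 \
          (fun x => x * s⁻¹) '' percolationCluster S ω 1).Finite :=
        hKfin.subset Set.diff_subset
      have hKne : (percolationCluster S ω 1).Nonempty := ⟨1, h1, Relation.ReflTransGen.refl⟩
      have hKpos : 0 < Nat.card (percolationCluster S ω 1) := by
        rw [Nat.card_coe_set_eq]
        exact (Set.ncard_pos hKfin).2 hKne
      rw [if_pos h1]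
      rw [ENNReal.ofReal_div_of_pos (by exact_mod_cast hKpos), ENNReal.ofReal_natCast,
        ENNReal.ofReal_natCast]
      rw [tsum_ite_finite (hD := hDfin) (r := ((Nat.card (percolationCluster S ω 1) : ℝ≥0∞))⁻¹)
        (f := fun x => g x ω) ?_ ?_]
      · rw [div_eq_mul_inv]
      · intro x hx
        rw [hg_def]
        refine if_pos ?_
        rw [Set.mem_diff, mem_image_rs] at hx
        exact hx
      · intro x hx
        rw [hg_def]
        refine if_neg ?_
        rw [Set.mem_diff, mem_image_rs] at hx
        exact hx
    · rw [if_neg h1, ENNReal.ofReal_zero]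
      symm
      rw [ENNReal.tsum_eq_zero]
      intro x
      rw [hg_def]
      exact if_neg (fun hc => h1 hc.1.1)
  rw [lintegral_congr_ae keyA]
  rw [lintegral_tsum (fun x => (hgmeas x).aemeasurable)]
  -- step B : mass transport, term by term
  have keyB : ∀ x : Γ, ∫⁻ ω, g x ω ∂P = ∫⁻ ω, h x⁻¹ ω ∂P := by
    intro x
    have hT : Measurable (fun ω : Γ → Bool => (fun y => ω (x⁻¹ * y))) :=
      measurable_pi_lambda _ fun y => measurable_pi_apply _
    have step : ∫⁻ ω, g x ω ∂P
        = ∫⁻ ω, g x (fun y => ω (x⁻¹ * y)) ∂P := by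
      conv_lhs => rw [← hinv x]
      exact lintegral_map (hgmeas x) hT
    rw [step]
    apply lintegral_congr
    intro ω
    have hKT : percolationCluster S (fun y => ω (x⁻¹ * y)) 1
        = (fun z => x * z) '' percolationCluster S ω x⁻¹ := by
      simpa using cluster_smul S x ω 1
    have himg : ∀ (C : Set Γ) (w : Γ), x * w ∈ (fun z => x * z) '' C ↔ w ∈ C := by
      intro C w
      constructor
      · rintro ⟨u, hu, he⟩
        rwa [mul_left_cancel he] at hu
      · intro hw; exact ⟨w, hw, rfl⟩
    rw [hg_def, hh_def]
    simp only
    rw [hKT]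
    by_cases hmem : (1 : Γ) ∈ percolationCluster S ω x⁻¹
    · have hx1 : x⁻¹ ∈ percolationCluster S ω 1 := mem_cluster_symm hSsymm hmem
      have hCeq : percolationCluster S ω x⁻¹ = percolationCluster S ω 1 :=
        cluster_eq_of_mem hSsymm hx1
      have e1 : x ∈ (fun z => x * z) '' percolationCluster S ω x⁻¹ := by
        have := (himg (percolationCluster S ω x⁻¹) 1).2 hmem
        simpa using this
      have e2 : (x * s ∈ (fun z => x * z) '' percolationCluster S ω x⁻¹)
          ↔ s ∈ percolationCluster S ω 1 := by
        rw [himg, hCeq]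
      have e3 : Nat.card ↥((fun z => x * z) '' percolationCluster S ω x⁻¹)
          = Nat.card ↥(percolationCluster S ω 1) := by
        rw [Nat.card_image_of_injective (mul_right_injective x), hCeq]
      rw [e3]
      refine if_congr ?_ rfl rfl
      constructor
      · rintro ⟨_, h2⟩; exact ⟨hx1, fun hs => h2 (e2.2 hs)⟩
      · rintro ⟨_, h2⟩; exact ⟨e1, fun hs => h2 (e2.1 hs)⟩
    · rw [if_neg, if_neg]
      · rintro ⟨hx1, -⟩
        exact hmem (mem_cluster_symm hSsymm hx1)
      · rintro ⟨hx1, -⟩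
        have : x * 1 ∈ (fun z => x * z) '' percolationCluster S ω x⁻¹ := by simpa using hx1
        exact hmem ((himg _ 1).1 this)
  calc ∑' x, ∫⁻ ω, g x ω ∂P
      = ∑' x : Γ, ∫⁻ ω, h x⁻¹ ω ∂P := tsum_congr keyB
    _ = ∑' x : Γ, ∫⁻ ω, h x ω ∂P := (Equiv.inv Γ).tsum_eq (fun x => ∫⁻ ω, h x ω ∂P)
    _ = ∫⁻ ω, ∑' x, h x ω ∂P := (lintegral_tsum (fun x => (hhmeas x).aemeasurable)).symm
    _ = ∫⁻ ω, E.indicator 1 ω ∂P := by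
        apply lintegral_congr_ae
        filter_upwards [hfin] with ω hω
        by_cases hs : s ∈ percolationCluster S ω 1
        · rw [ENNReal.tsum_eq_zero.2 (fun x => by
            rw [hh_def]; exact if_neg (fun hc => hc.2 hs))]
          rw [Set.indicator_of_notMem (fun hc => hc.2 hs)]
        · by_cases h1 : ω 1 = true
          · have hKfin : (percolationCluster S ω 1).Finite := hω 1
            have hKne : (percolationCluster S ω 1).Nonempty :=
              ⟨1, h1, Relation.ReflTransGen.refl⟩
            have hKpos : 0 < Nat.card (percolationCluster S ω 1) := by
              rw [Nat.card_coe_set_eq]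
              exact (Set.ncard_pos hKfin).2 hKne
            rw [tsum_ite_finite (hD := hKfin)
              (r := ((Nat.card (percolationCluster S ω 1) : ℝ≥0∞))⁻¹)
              (f := fun x => h x ω)
              (fun x hx => by rw [hh_def]; exact if_pos ⟨hx, hs⟩)
              (fun x hx => by rw [hh_def]; exact if_neg (fun hc => hx hc.1))]
            rw [ENNReal.mul_inv_cancel (by exact_mod_cast hKpos.ne') (ENNReal.natCast_ne_top _)]
            rw [Set.indicator_of_mem (show ω ∈ E from ⟨h1, hs⟩) (1 : (Γ → Bool) → ℝ≥0∞)]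
            rfl
          · rw [ENNReal.tsum_eq_zero.2 (fun x => by
              rw [hh_def]; exact if_neg (fun hc => h1 hc.1.1))]
            rw [Set.indicator_of_notMem (fun hc => h1 hc.1)]
    _ = P E := lintegral_indicator_one hE
end
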